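/- Set r = √2 − 1 and s = (1/2)·√(9 + 6√2) − √2 − 1/2. There exist points c₁, c₂, c₃, q, p ∈ ℝ³ such that dist(cᵢ, cⱼ) = 2 for i ≠ j, dist(q, cᵢ) = 1 + r for all i, dist(p, cᵢ) = 1 + s for all i, and dist(p, q) = r + s. (A sphere of radius s fills the tetrahedral hole bounded by three mutually tangent unit spheres and a sphere of radius √2 − 1 tangent to all three, as arises in a close-packing of unit spheres with octahedral holes filled by spheres of radius √2 − 1.) -/

import Mathlib

open Real

private lemma key_sqrtA : Real.sqrt (9 + 6 * Real.sqrt 2) = Real.sqrt 3 * (1 + Real.sqrt 2) := by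
  have h2 : Real.sqrt 2 ^ 2 = 2 := Real.sq_sqrt (by norm_num)
  have h3 : Real.sqrt 3 ^ 2 = 3 := Real.sq_sqrt (by norm_num)
  have h2n : (0:ℝ) ≤ Real.sqrt 2 := Real.sqrt_nonneg 2
  have h3n : (0:ℝ) ≤ Real.sqrt 3 := Real.sqrt_nonneg 3
  rw [show (9 : ℝ) + 6 * Real.sqrt 2 = (Real.sqrt 3 * (1 + Real.sqrt 2))^2 by
    linear_combination (-(1 + Real.sqrt 2)^2) * h3 + (-3 : ℝ) * h2]
  exact Real.sqrt_sq (by positivity)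

private lemma sqrt_eq_of_sq {x y : ℝ} (hy : 0 ≤ y) (hx : x = y ^ 2) : Real.sqrt x = y := by
  rw [hx]; exact Real.sqrt_sq hy

/-- With `r = √2 − 1` and `s = (1/2)√(9 + 6√2) − √2 − 1/2`, there exist three mutually
tangent unit spheres (centers `cᵢ`, pairwise distances 2), a sphere of radius `r`
tangent to all three (center `q`), and a sphere of radius `s` tangent to all three unit
spheres and to the sphere of radius `r` (center `p`): a sphere of radius `s` fills the
tetrahedral hole `111r` arising in a close-packing of unit spheres whose octahedral
holes are filled by spheres of radius `√2 − 1`. -/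
theorem sphere_fills_111r_hole :
    let r : ℝ := Real.sqrt 2 - 1
    let s : ℝ := (1 / 2) * Real.sqrt (9 + 6 * Real.sqrt 2) - Real.sqrt 2 - 1 / 2
    ∃ (c : Fin 3 → EuclideanSpace ℝ (Fin 3)) (q p : EuclideanSpace ℝ (Fin 3)),
      (∀ i j, i ≠ j → dist (c i) (c j) = 2) ∧
      (∀ i, dist q (c i) = 1 + r) ∧
      (∀ i, dist p (c i) = 1 + s) ∧
      dist p q = r + s := by
  intro r s
  set s2 := Real.sqrt 2 with hs2def
  set s3 := Real.sqrt 3 with hs3def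
  have h2 : s2 ^ 2 = 2 := Real.sq_sqrt (by norm_num)
  have h3 : s3 ^ 2 = 3 := Real.sq_sqrt (by norm_num)
  have h2n : (0:ℝ) ≤ s2 := Real.sqrt_nonneg 2
  have h3n : (0:ℝ) ≤ s3 := Real.sqrt_nonneg 3
  have h2lb : (1.4:ℝ) ≤ s2 := by
    rw [hs2def, show (1.4:ℝ) = Real.sqrt (1.4^2) from (Real.sqrt_sq (by norm_num)).symm]
    exact Real.sqrt_le_sqrt (by norm_num)
  have h3lb : (1.7:ℝ) ≤ s3 := by
    rw [hs3def, show (1.7:ℝ) = Real.sqrt (1.7^2) from (Real.sqrt_sq (by norm_num)).symm]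
    exact Real.sqrt_le_sqrt (by norm_num)
  have h2ub : s2 ≤ 1.5 := by
    rw [hs2def, show (1.5:ℝ) = Real.sqrt (1.5^2) from (Real.sqrt_sq (by norm_num)).symm]
    exact Real.sqrt_le_sqrt (by norm_num)
  have h3ub : s3 ≤ 1.8 := by
    rw [hs3def, show (1.8:ℝ) = Real.sqrt (1.8^2) from (Real.sqrt_sq (by norm_num)).symm]
    exact Real.sqrt_le_sqrt (by norm_num)
  have hA : Real.sqrt (9 + 6 * s2) = s3 * (1 + s2) := key_sqrtA
  have hr : r = s2 - 1 := rfl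
  have hs : s = s3 * (1 + s2) / 2 - s2 - 1/2 := by
    show (1/2) * Real.sqrt (9 + 6 * s2) - s2 - 1/2 = _
    rw [hA]; ring
  have hs1pos : (0:ℝ) ≤ 1 + s := by rw [hs]; nlinarith
  have hrspos : (0:ℝ) ≤ r + s := by rw [hr, hs]; nlinarith
  refine ⟨![!₂[2*s3/3, 0, 0], !₂[-s3/3, 1, 0], !₂[-s3/3, -1, 0]],
      !₂[0, 0, s2*s3/3], !₂[0, 0, s2*s3/3 - (r + s)], ?_, ?_, ?_, ?_⟩
  · intro i j hij
    fin_cases i <;> fin_cases j <;>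
      first
      | exact absurd rfl hij
      | (rw [EuclideanSpace.dist_eq]
         simp [Fin.sum_univ_three, Real.dist_eq, sq_abs]
         first
         | (norm_num; done)
         | (apply sqrt_eq_of_sq (by norm_num)
            first
            | linear_combination h3
            | norm_num))
  · intro i
    rw [hr, show (1:ℝ) + (s2 - 1) = s2 from by ring]
    fin_cases i <;>
      (rw [EuclideanSpace.dist_eq]
       simp [Fin.sum_univ_three, Real.dist_eq, sq_abs]
       apply sqrt_eq_of_sq h2n
       first
       | linear_combination (4/9 + s2^2/9) * h3 - (2/3) * h2
       | linear_combination (1/9 + s2^2/9) * h3 - (2/3) * h2)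
  · intro i
    fin_cases i <;>
      (rw [EuclideanSpace.dist_eq]
       simp [Fin.sum_univ_three, Real.dist_eq, sq_abs]
       apply sqrt_eq_of_sq hs1pos
       rw [hr, hs]
       first
       | linear_combination (-2/9*s3^2 + s3 - 1) * h2 + (-s2/3 - 4/9 + 4/9) * h3
       | linear_combination (-2/9*s3^2 + s3 - 1) * h2 + (-s2/3 - 4/9 + 1/9) * h3)
  · rw [EuclideanSpace.dist_eq]
    simp [Fin.sum_univ_three, Real.dist_eq, sq_abs]
    apply sqrt_eq_of_sq hrspos
    ring
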